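/- Let q ≥ 1 and X = Fin q ⊕ Fin q, and let β be a pairing of X. Then there exists a transverse pairing τ of X with |τ∘β| = b_R(β). Consequently, the minimum of |τ∘β| over all transverse pairings τ equals b_R(β) = 2♭(β). -/

import Mathlib

set_option linter.unusedSectionVars false
set_option linter.unusedVariables false


/-- Number of cycles (orbits of the generated cyclic group, fixed points included). -/
noncomputable def permCycles {X : Type*} (σ : Equiv.Perm X) : ℕ :=
  Nat.card (MulAction.orbitRel.Quotient (Subgroup.zpowers σ) X)

/-- The length `|σ| = card X - #σ` of a permutation. -/
noncomputable def permLength {X : Type*} (σ : Equiv.Perm X) : ℕ :=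
  Nat.card X - permCycles σ

/-- A pairing of `X` is a fixed-point-free involution of `X`. -/
def IsPairing {X : Type*} (α : Equiv.Perm X) : Prop :=
  α * α = 1 ∧ ∀ x, α x ≠ x

/-- A pairing of `Fin q ⊕ Fin q` is transverse if it sends the L side to the R side. -/
def IsTransverse {q : ℕ} (τ : Equiv.Perm (Fin q ⊕ Fin q)) : Prop :=
  ∀ i : Fin q, (τ (Sum.inl i)).isRight

/-- `b_R(β)`: the number of R-side elements paired to R-side elements (twice the
number of bumps of `β`). -/
def bR {q : ℕ} (β : Equiv.Perm (Fin q ⊕ Fin q)) : ℕ :=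
  (Finset.univ.filter fun i : Fin q => (β (Sum.inr i)).isRight).card


open Finset MulAction

section Framework
variable {X : Type*} [Fintype X] [DecidableEq X] (σ : Equiv.Perm X)

noncomputable instance : Fintype (orbitRel.Quotient (Subgroup.zpowers σ) X) :=
  @Fintype.ofFinite _ (Quotient.finite _)

noncomputable instance : DecidableEq (orbitRel.Quotient (Subgroup.zpowers σ) X) :=
  Classical.decEq _

/-- The fiber (orbit) corresponding to a class. -/
noncomputable def fib (c : orbitRel.Quotient (Subgroup.zpowers σ) X) : Finset X :=
  Finset.univ.filter fun x =>
    (Quotient.mk'' x : orbitRel.Quotient (Subgroup.zpowers σ) X) = c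

lemma mem_fib {x c} :
    x ∈ fib σ c ↔ (Quotient.mk'' x : orbitRel.Quotient (Subgroup.zpowers σ) X) = c := by
  simp [fib]

lemma fmk_apply (x : X) :
    (Quotient.mk'' (σ x) : orbitRel.Quotient (Subgroup.zpowers σ) X) = Quotient.mk'' x := by
  apply Quotient.sound'
  exact MulAction.orbitRel_apply.2 ⟨⟨σ, Subgroup.mem_zpowers σ⟩, rfl⟩

lemma sum_card_fib : ∑ c, (fib σ c).card = Fintype.card X := by
  rw [← Finset.card_univ (α := X)]
  exact (Finset.card_eq_sum_card_fiberwise (fun x _ => Finset.mem_univ _)).symm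

lemma one_le_card_fib (c) : 1 ≤ (fib σ c).card := by
  refine Finset.card_pos.2 ⟨c.out, ?_⟩
  rw [mem_fib]
  exact Quotient.out_eq' c

lemma card_filter_eq_sum_fib (p : X → Prop) [DecidablePred p] :
    ∑ c, ((fib σ c).filter p).card = (Finset.univ.filter p).card := by
  rw [Finset.card_eq_sum_card_fiberwise
    (f := fun x => (Quotient.mk'' x : orbitRel.Quotient (Subgroup.zpowers σ) X))
    (t := Finset.univ) (fun x _ => Finset.mem_univ _)]
  refine Finset.sum_congr rfl fun c _ => ?_
  congr 1
  ext x
  simp [fib, Finset.mem_filter, and_comm]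

lemma permLength_eq : permLength σ = ∑ c, ((fib σ c).card - 1) := by
  have h1 : ∑ c, ((fib σ c).card - 1) + Fintype.card (orbitRel.Quotient (Subgroup.zpowers σ) X)
      = ∑ c, (fib σ c).card := by
    rw [← Finset.card_univ, Finset.card_eq_sum_ones, ← Finset.sum_add_distrib]
    exact Finset.sum_congr rfl fun c _ => Nat.succ_pred_eq_of_pos (one_le_card_fib σ c)
  have h2 := sum_card_fib σ
  have h3 : permCycles σ = Fintype.card (orbitRel.Quotient (Subgroup.zpowers σ) X) :=
    Nat.card_eq_fintype_card
  have h4 : permLength σ = Fintype.card X - permCycles σ := by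
    rw [permLength, Nat.card_eq_fintype_card]
  omega

lemma even_card_fib_filter (s : X → ZMod 2) (c) :
    Even (((fib σ c).filter fun x => s (σ x) ≠ s x).card) := by
  rw [even_iff_two_dvd, ← ZMod.natCast_eq_zero_iff]
  have key : ∀ a b : ZMod 2, ((if a ≠ b then 1 else 0 : ℕ) : ZMod 2) = a + b := by decide
  have h0 : ((((fib σ c).filter fun x => s (σ x) ≠ s x).card : ℕ) : ZMod 2)
      = ∑ x ∈ fib σ c, (s (σ x) + s x) := by
    rw [Finset.card_filter, Nat.cast_sum]
    exact Finset.sum_congr rfl fun x _ => key _ _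
  rw [h0, Finset.sum_add_distrib]
  have h1 : ∑ x ∈ fib σ c, s (σ x) = ∑ x ∈ fib σ c, s x := by
    refine Finset.sum_nbij' (fun x => σ x) (fun y => σ.symm y) ?_ ?_ ?_ ?_ ?_
    · intro a ha; rw [mem_fib] at ha ⊢; rw [fmk_apply, ha]
    · intro a ha; rw [mem_fib] at ha ⊢; rw [← ha, ← fmk_apply σ (σ.symm a), Equiv.apply_symm_apply]
    · intro a _; exact σ.symm_apply_apply a
    · intro a _; exact σ.apply_symm_apply a
    · intro a _; rfl
  rw [h1]
  have : ∀ a : ZMod 2, a + a = 0 := by decide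
  rw [← Finset.sum_add_distrib]
  rw [Finset.sum_congr rfl fun x _ => this (s x), Finset.sum_const, smul_zero]

lemma two_mul_permLength_ge (s : X → ZMod 2) :
    (Finset.univ.filter fun x => s (σ x) ≠ s x).card ≤ 2 * permLength σ := by
  rw [permLength_eq, ← card_filter_eq_sum_fib σ (fun x => s (σ x) ≠ s x), Finset.mul_sum]
  refine Finset.sum_le_sum fun c _ => ?_
  obtain ⟨m, hm⟩ := even_card_fib_filter σ s c
  have hle : ((fib σ c).filter fun x => s (σ x) ≠ s x).card ≤ (fib σ c).card :=
    Finset.card_filter_le _ _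
  have h1 := one_le_card_fib σ c
  omega

lemma zpow_invol (h2 : σ * σ = 1) : ∀ n : ℤ, σ ^ n = 1 ∨ σ ^ n = σ := by
  have hsq : σ ^ (2 : ℤ) = 1 := by
    rw [show (2:ℤ) = ((2:ℕ):ℤ) from rfl, zpow_natCast, pow_two, h2]
  intro n
  rcases Int.even_or_odd n with ⟨m, hm⟩ | ⟨m, hm⟩
  · left; rw [hm, show m + m = 2 * m by ring, zpow_mul, hsq, one_zpow]
  · right; rw [hm, zpow_add, zpow_mul, hsq, one_zpow, one_mul, zpow_one]

lemma two_mul_permLength_le (h2 : σ * σ = 1) :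
    2 * permLength σ ≤ (Finset.univ.filter fun x => σ x ≠ x).card := by
  rw [permLength_eq, ← card_filter_eq_sum_fib σ (fun x => σ x ≠ x), Finset.mul_sum]
  refine Finset.sum_le_sum fun c _ => ?_
  set a := c.out with ha
  have hmka : (Quotient.mk'' a : orbitRel.Quotient (Subgroup.zpowers σ) X) = c :=
    Quotient.out_eq' c
  have hsub : fib σ c ⊆ {a, σ a} := by
    intro x hx
    rw [mem_fib, ← hmka, Quotient.eq''] at hx
    obtain ⟨⟨g, hg⟩, hgx⟩ := MulAction.mem_orbit_iff.1 (MulAction.orbitRel_apply.1 hx)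
    obtain ⟨n, rfl⟩ := Subgroup.mem_zpowers_iff.1 hg
    have hgx : (σ ^ n) a = x := hgx
    rcases zpow_invol σ h2 n with h | h <;> rw [h] at hgx
    · simp only [Equiv.Perm.one_apply] at hgx
      rw [← hgx]; exact Finset.mem_insert_self _ _
    · rw [← hgx]; exact Finset.mem_insert_of_mem (Finset.mem_singleton_self _)
  by_cases hc : (fib σ c).card ≤ 1
  · omega
  · push_neg at hc
    have hne : σ a ≠ a := by
      intro h
      rw [h] at hsub
      have haa : ({a, a} : Finset X) = {a} := by
        rw [Finset.insert_eq_self]; exact Finset.mem_singleton_self a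
      rw [haa] at hsub
      have := Finset.card_le_card hsub
      rw [Finset.card_singleton] at this
      omega
    have hcard2 : ({a, σ a} : Finset X).card = 2 := by
      rw [Finset.card_insert_of_notMem (by simp [Ne.symm hne]), Finset.card_singleton]
    have hfib : fib σ c = {a, σ a} := by
      apply Finset.eq_of_subset_of_card_le hsub
      omega
    have hss : ∀ x, σ (σ x) = x := fun x => by
      rw [← Equiv.Perm.mul_apply, h2, Equiv.Perm.one_apply]
    have hfilter : ((fib σ c).filter fun x => σ x ≠ x) = fib σ c := by
      rw [Finset.filter_eq_self]
      intro x hx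
      rw [hfib, Finset.mem_insert, Finset.mem_singleton] at hx
      rcases hx with rfl | rfl
      · exact hne
      · rw [hss]; exact fun h => hne h.symm
    rw [hfilter, hfib, hcard2]
    omega

end Framework
section App

open Finset

variable {q : ℕ}

/-- Side indicator with values in `ZMod 2`. -/
def sd : Fin q ⊕ Fin q → ZMod 2 := Sum.elim (fun _ => 0) (fun _ => 1)

lemma sd_eq_zero_iff (y : Fin q ⊕ Fin q) : sd y = 0 ↔ y.isLeft := by
  cases y <;> simp [sd]

lemma sd_eq_one_iff (y : Fin q ⊕ Fin q) : sd y = 1 ↔ y.isRight := by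
  cases y <;> simp [sd]

lemma pairing_invol {X : Type*} {β : Equiv.Perm X} (hβ : IsPairing β) (x : X) : β (β x) = x := by
  rw [← Equiv.Perm.mul_apply, hβ.1, Equiv.Perm.one_apply]

variable (β : Equiv.Perm (Fin q ⊕ Fin q))

lemma card_LR_eq_RL (hβ : IsPairing β) :
    (Finset.univ.filter fun i : Fin q => (β (Sum.inl i)).isRight).card
      = (Finset.univ.filter fun j : Fin q => (β (Sum.inr j)).isLeft).card := by
  refine Finset.card_bij
    (fun i hi => (β (Sum.inl i)).getRight (by simpa using hi)) ?_ ?_ ?_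
  · intro i hi
    simp only [Finset.mem_filter, Finset.mem_univ, true_and] at hi ⊢
    rw [Sum.inr_getRight, pairing_invol hβ]
    rfl
  · intro i1 h1 i2 h2 h
    have h' := congrArg (Sum.inr (α := Fin q)) h
    rw [Sum.inr_getRight, Sum.inr_getRight] at h'
    exact Sum.inl.inj (β.injective h')
  · intro j hj
    simp only [Finset.mem_filter, Finset.mem_univ, true_and] at hj
    obtain ⟨i, hi⟩ := Sum.isLeft_iff.1 hj
    have hb : β (Sum.inl i) = Sum.inr j := by rw [← hi, pairing_invol hβ]
    refine ⟨i, by simp [hb], ?_⟩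
    apply Sum.inr_injective
    rw [Sum.inr_getRight, hb]

lemma card_LL_eq_bR (hβ : IsPairing β) :
    (Finset.univ.filter fun i : Fin q => (β (Sum.inl i)).isLeft).card = bR β := by
  have h1 := Finset.card_filter_add_card_filter_not (s := Finset.univ)
    (p := fun i : Fin q => (β (Sum.inl i)).isLeft)
  have h2 := Finset.card_filter_add_card_filter_not (s := Finset.univ)
    (p := fun j : Fin q => (β (Sum.inr j)).isRight)
  have e1 : (Finset.univ.filter fun i : Fin q => ¬ (β (Sum.inl i)).isLeft)
      = Finset.univ.filter fun i : Fin q => (β (Sum.inl i)).isRight :=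
    Finset.filter_congr fun i _ => by rw [Sum.not_isLeft]
  have e2 : (Finset.univ.filter fun j : Fin q => ¬ (β (Sum.inr j)).isRight)
      = Finset.univ.filter fun j : Fin q => (β (Sum.inr j)).isLeft :=
    Finset.filter_congr fun j _ => by rw [Sum.not_isRight]
  rw [e1] at h1
  rw [e2] at h2
  have h3 := card_LR_eq_RL β hβ
  unfold bR
  omega

lemma card_sameside (hβ : IsPairing β) :
    (Finset.univ.filter fun x : Fin q ⊕ Fin q => sd (β x) = sd x).card = 2 * bR β := by
  have h0 : (Finset.univ.filter fun x : Fin q ⊕ Fin q => sd (β x) = sd x).card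
      = Fintype.card {x : Fin q ⊕ Fin q // sd (β x) = sd x} :=
    (Fintype.card_subtype _).symm
  rw [h0, Fintype.card_congr (Equiv.subtypeSum
    (p := fun x : Fin q ⊕ Fin q => sd (β x) = sd x)), Fintype.card_sum,
    Fintype.card_subtype, Fintype.card_subtype]
  have e1 : (Finset.univ.filter fun i : Fin q => sd (β (Sum.inl i)) = sd (Sum.inl i))
      = Finset.univ.filter fun i : Fin q => (β (Sum.inl i)).isLeft :=
    Finset.filter_congr fun i _ => by
      show sd (β (Sum.inl i)) = 0 ↔ _
      rw [sd_eq_zero_iff]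
  have e2 : (Finset.univ.filter fun j : Fin q => sd (β (Sum.inr j)) = sd (Sum.inr j))
      = Finset.univ.filter fun j : Fin q => (β (Sum.inr j)).isRight :=
    Finset.filter_congr fun j _ => by
      show sd (β (Sum.inr j)) = 1 ↔ _
      rw [sd_eq_one_iff]
  rw [e1, e2, card_LL_eq_bR β hβ]
  have : (Finset.univ.filter fun j : Fin q => (β (Sum.inr j)).isRight).card = bR β := rfl
  rw [this]
  ring

lemma flip_side (τ : Equiv.Perm (Fin q ⊕ Fin q)) (hτ : IsPairing τ) (ht : IsTransverse τ) :
    ∀ y, sd (τ y) = sd y + 1 := by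
  intro y
  match y with
  | Sum.inl i =>
    obtain ⟨j, hj⟩ := Sum.isRight_iff.1 (ht i)
    rw [hj]
    show (1 : ZMod 2) = 0 + 1
    decide
  | Sum.inr j =>
    have hk : Function.Surjective (fun i : Fin q => (τ (Sum.inl i)).getRight (ht i)) := by
      apply Finite.injective_iff_surjective.1
      intro i1 i2 h
      have h' := congrArg (Sum.inr (α := Fin q)) h
      rw [Sum.inr_getRight, Sum.inr_getRight] at h'
      exact Sum.inl.inj (τ.injective h')
    obtain ⟨i, hi⟩ := hk j
    have hji : τ (Sum.inl i) = Sum.inr j := by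
      rw [← Sum.inr_getRight (τ (Sum.inl i)) (ht i)]
      exact congrArg (Sum.inr (α := Fin q)) hi
    have h2 : τ (Sum.inr j) = Sum.inl i := by rw [← hji, pairing_invol hτ]
    rw [h2]
    show (0 : ZMod 2) = 1 + 1
    decide

lemma lower_bound (hβ : IsPairing β) (τ : Equiv.Perm (Fin q ⊕ Fin q))
    (hτ : IsPairing τ) (ht : IsTransverse τ) : bR β ≤ permLength (τ * β) := by
  have h := two_mul_permLength_ge (τ * β) sd
  have hfe : (Finset.univ.filter fun x : Fin q ⊕ Fin q => sd ((τ * β) x) ≠ sd x)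
      = Finset.univ.filter fun x : Fin q ⊕ Fin q => sd (β x) = sd x := by
    refine Finset.filter_congr fun x _ => ?_
    rw [Equiv.Perm.mul_apply, flip_side τ hτ ht (β x)]
    have : ∀ a b : ZMod 2, (a + 1 ≠ b ↔ a = b) := by decide
    exact this _ _
  rw [hfe, card_sameside β hβ] at h
  omega

end App
section Cons

open Finset

lemma cycleType_fpfree_invol {Y : Type*} [Fintype Y] [DecidableEq Y] (w : Equiv.Perm Y)
    (h2 : w * w = 1) (hf : ∀ y, w y ≠ y) :
    w.cycleType = Multiset.replicate (Fintype.card Y / 2) 2 ∧ 2 * (Fintype.card Y / 2) = Fintype.card Y := by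
  have hord : orderOf w ∣ 2 := orderOf_dvd_of_pow_eq_one (by rw [pow_two, h2])
  have h2mem : ∀ n ∈ w.cycleType, n = 2 := by
    intro n hn
    have hd : n ∣ 2 := (Multiset.dvd_lcm hn).trans (by rw [Equiv.Perm.lcm_cycleType]; exact hord)
    have h1 := Equiv.Perm.two_le_of_mem_cycleType hn
    have h2' := Nat.le_of_dvd (by norm_num) hd
    omega
  have hsupp : w.support = Finset.univ := by
    ext y
    simp [Equiv.Perm.mem_support, hf y]
  have hsum : w.cycleType.sum = Fintype.card Y := by
    rw [Equiv.Perm.sum_cycleType, hsupp, Finset.card_univ]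
  have hrep : w.cycleType = Multiset.replicate (Multiset.card w.cycleType) 2 :=
    Multiset.eq_replicate.2 ⟨rfl, h2mem⟩
  rw [hrep, Multiset.sum_replicate, smul_eq_mul] at hsum
  constructor
  · rw [hrep]
    congr 1
    omega
  · omega

variable {q : ℕ} (β : Equiv.Perm (Fin q ⊕ Fin q))

/-- indices `i` with `β (inl i)` on the left. -/
def Lw := {i : Fin q // (β (Sum.inl i)).isLeft}
/-- indices `j` with `β (inr j)` on the right. -/
def Rw := {j : Fin q // (β (Sum.inr j)).isRight}

instance : Fintype (Lw β) := by unfold Lw; infer_instance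
instance : Fintype (Rw β) := by unfold Rw; infer_instance
instance : DecidableEq (Lw β) := by unfold Lw; infer_instance
instance : DecidableEq (Rw β) := by unfold Rw; infer_instance

variable {β}

def fA (hβ : IsPairing β) (a : Lw β) : Lw β :=
  ⟨(β (Sum.inl a.1)).getLeft a.2, by
    rw [Sum.inl_getLeft, pairing_invol hβ]; rfl⟩

lemma inl_fA (hβ : IsPairing β) (a : Lw β) : Sum.inl ((fA hβ a).1) = β (Sum.inl a.1) :=
  Sum.inl_getLeft _ _

lemma fA_invol (hβ : IsPairing β) : Function.Involutive (fA hβ) := by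
  intro a
  apply Subtype.ext
  apply Sum.inl_injective
  rw [inl_fA hβ (fA hβ a), inl_fA hβ a, pairing_invol hβ]

lemma fA_ne (hβ : IsPairing β) (a : Lw β) : fA hβ a ≠ a := by
  intro h
  have h1 := inl_fA hβ a
  rw [h] at h1
  exact hβ.2 (Sum.inl a.1) h1.symm

def fB (hβ : IsPairing β) (b : Rw β) : Rw β :=
  ⟨(β (Sum.inr b.1)).getRight b.2, by
    rw [Sum.inr_getRight, pairing_invol hβ]; rfl⟩

lemma inr_fB (hβ : IsPairing β) (b : Rw β) : Sum.inr ((fB hβ b).1) = β (Sum.inr b.1) :=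
  Sum.inr_getRight _ _

lemma fB_invol (hβ : IsPairing β) : Function.Involutive (fB hβ) := by
  intro b
  apply Subtype.ext
  apply Sum.inr_injective
  rw [inr_fB hβ (fB hβ b), inr_fB hβ b, pairing_invol hβ]

lemma fB_ne (hβ : IsPairing β) (b : Rw β) : fB hβ b ≠ b := by
  intro h
  have h1 := inr_fB hβ b
  rw [h] at h1
  exact hβ.2 (Sum.inr b.1) h1.symm

lemma card_Lw_eq_Rw (hβ : IsPairing β) : Fintype.card (Lw β) = Fintype.card (Rw β) := by
  show Fintype.card {i : Fin q // (β (Sum.inl i)).isLeft}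
      = Fintype.card {j : Fin q // (β (Sum.inr j)).isRight}
  rw [Fintype.card_subtype, Fintype.card_subtype, card_LL_eq_bR β hβ]
  rfl

/-- There is a bijection `φ : Lw ≃ Rw` intertwining the actions of `β`. -/
lemma exists_phi (hβ : IsPairing β) :
    ∃ φ : Lw β ≃ Rw β, ∀ a : Lw β, φ (fA hβ a) = fB hβ (φ a) := by
  classical
  let e : Lw β ≃ Rw β := Fintype.equivOfCardEq (card_Lw_eq_Rw hβ)
  let u : Equiv.Perm (Lw β) := Function.Involutive.toPerm _ (fA_invol hβ)
  let v : Equiv.Perm (Rw β) := Function.Involutive.toPerm _ (fB_invol hβ)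
  let v2 : Equiv.Perm (Lw β) := e.permCongr.symm v
  have hu : ∀ a, u a = fA hβ a := fun a => rfl
  have hv : ∀ b, v b = fB hβ b := fun b => rfl
  have hv2 : ∀ a, v2 a = e.symm (v (e a)) := fun a => Equiv.permCongr_symm_apply e v a
  have hu2 : u * u = 1 := by
    ext a
    simp only [Equiv.Perm.mul_apply, hu, Equiv.Perm.one_apply]
    exact fA_invol hβ a
  have hv2inv : v2 * v2 = 1 := by
    ext a
    simp only [Equiv.Perm.mul_apply, hv2, Equiv.apply_symm_apply, hv, Equiv.Perm.one_apply]
    rw [fB_invol hβ (e a), Equiv.symm_apply_apply]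
  have hufp : ∀ a, u a ≠ a := fun a => fA_ne hβ a
  have hv2fp : ∀ a, v2 a ≠ a := by
    intro a h
    rw [hv2] at h
    have : v (e a) = e a := by
      have := congrArg e h
      rwa [Equiv.apply_symm_apply] at this
    exact fB_ne hβ (e a) this
  have hconj : IsConj u v2 := by
    rw [Equiv.Perm.isConj_iff_cycleType_eq]
    rw [(cycleType_fpfree_invol u hu2 hufp).1, (cycleType_fpfree_invol v2 hv2inv hv2fp).1]
  obtain ⟨g, hg⟩ := isConj_iff.1 hconj
  refine ⟨g.trans e, fun a => ?_⟩
  have h1 : (g * u * g⁻¹) (g a) = v2 (g a) := by rw [hg]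
  rw [Equiv.Perm.mul_apply, Equiv.Perm.mul_apply, Equiv.Perm.inv_def, Equiv.symm_apply_apply, hv2] at h1
  -- h1 : g (u a) = e.symm (v (e (g a)))
  show e (g (u a)) = fB hβ (e (g a))
  rw [h1, Equiv.apply_symm_apply, hv]

variable (φ : Lw β ≃ Rw β)

/-- The transverse pairing built from `φ`. -/
def tfun : Fin q ⊕ Fin q → Fin q ⊕ Fin q
  | Sum.inl i =>
      if h : (β (Sum.inl i)).isLeft then Sum.inr (φ ⟨i, h⟩).1 else β (Sum.inl i)
  | Sum.inr j =>
      if h : (β (Sum.inr j)).isRight then Sum.inl (φ.symm ⟨j, h⟩).1 else β (Sum.inr j)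

lemma tfun_invol (hβ : IsPairing β) : Function.Involutive (tfun φ) := by
  intro x
  match x with
  | Sum.inl i =>
    by_cases h : (β (Sum.inl i)).isLeft
    · show tfun φ (if h : (β (Sum.inl i)).isLeft then Sum.inr (φ ⟨i, h⟩).1 else β (Sum.inl i))
        = Sum.inl i
      rw [dif_pos h]
      show (if h' : (β (Sum.inr (φ ⟨i, h⟩).1)).isRight then Sum.inl (φ.symm ⟨(φ ⟨i, h⟩).1, h'⟩).1
        else β (Sum.inr (φ ⟨i, h⟩).1)) = Sum.inl i
      rw [dif_pos (φ ⟨i, h⟩).2]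
      congr 1
      have : (⟨(φ ⟨i, h⟩).1, (φ ⟨i, h⟩).2⟩ : Rw β) = φ ⟨i, h⟩ := rfl
      rw [this]; erw [Equiv.symm_apply_apply]
    · show tfun φ (if h : (β (Sum.inl i)).isLeft then Sum.inr (φ ⟨i, h⟩).1 else β (Sum.inl i))
        = Sum.inl i
      rw [dif_neg h]
      obtain ⟨j, hj⟩ := Sum.isRight_iff.1 (Sum.not_isLeft.1 h)
      rw [hj]
      show (if h' : (β (Sum.inr j)).isRight then Sum.inl (φ.symm ⟨j, h'⟩).1
        else β (Sum.inr j)) = Sum.inl i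
      have hβj : β (Sum.inr j) = Sum.inl i := by rw [← hj, pairing_invol hβ]
      rw [dif_neg (by rw [hβj]; simp), hβj]
  | Sum.inr j =>
    by_cases h : (β (Sum.inr j)).isRight
    · show tfun φ (if h : (β (Sum.inr j)).isRight then Sum.inl (φ.symm ⟨j, h⟩).1 else β (Sum.inr j))
        = Sum.inr j
      rw [dif_pos h]
      show (if h' : (β (Sum.inl (φ.symm ⟨j, h⟩).1)).isLeft then Sum.inr (φ ⟨(φ.symm ⟨j, h⟩).1, h'⟩).1
        else β (Sum.inl (φ.symm ⟨j, h⟩).1)) = Sum.inr j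
      rw [dif_pos (φ.symm ⟨j, h⟩).2]
      congr 1
      have : (⟨(φ.symm ⟨j, h⟩).1, (φ.symm ⟨j, h⟩).2⟩ : Lw β) = φ.symm ⟨j, h⟩ := rfl
      rw [this]; erw [Equiv.apply_symm_apply]
    · show tfun φ (if h : (β (Sum.inr j)).isRight then Sum.inl (φ.symm ⟨j, h⟩).1 else β (Sum.inr j))
        = Sum.inr j
      rw [dif_neg h]
      obtain ⟨i, hi⟩ := Sum.isLeft_iff.1 (Sum.not_isRight.1 h)
      rw [hi]
      show (if h' : (β (Sum.inl i)).isLeft then Sum.inr (φ ⟨i, h'⟩).1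
        else β (Sum.inl i)) = Sum.inr j
      have hβi : β (Sum.inl i) = Sum.inr j := by rw [← hi, pairing_invol hβ]
      rw [dif_neg (by rw [hβi]; simp), hβi]

end Cons
section Fin2

open Finset

variable {q : ℕ} {β : Equiv.Perm (Fin q ⊕ Fin q)} (φ : Lw β ≃ Rw β)

lemma tfun_inl_pos (i : Fin q) (h : (β (Sum.inl i)).isLeft) :
    tfun φ (Sum.inl i) = Sum.inr (φ ⟨i, h⟩).1 := dif_pos h

lemma tfun_inl_neg (i : Fin q) (h : ¬ (β (Sum.inl i)).isLeft) :
    tfun φ (Sum.inl i) = β (Sum.inl i) := dif_neg h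

lemma tfun_inr_pos (j : Fin q) (h : (β (Sum.inr j)).isRight) :
    tfun φ (Sum.inr j) = Sum.inl (φ.symm ⟨j, h⟩).1 := dif_pos h

lemma tfun_inr_neg (j : Fin q) (h : ¬ (β (Sum.inr j)).isRight) :
    tfun φ (Sum.inr j) = β (Sum.inr j) := dif_neg h

lemma tfun_isRight (x : Fin q ⊕ Fin q) : (tfun φ x).isRight = !x.isRight := by
  match x with
  | Sum.inl i =>
    by_cases h : (β (Sum.inl i)).isLeft
    · rw [tfun_inl_pos φ i h]; rfl
    · rw [tfun_inl_neg φ i h, Sum.not_isLeft.1 h]; rfl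
  | Sum.inr j =>
    by_cases h : (β (Sum.inr j)).isRight
    · rw [tfun_inr_pos φ j h]; rfl
    · rw [tfun_inr_neg φ j h]
      have := Sum.not_isRight.1 h
      obtain ⟨i, hi⟩ := Sum.isLeft_iff.1 this
      rw [hi]; rfl

lemma tfun_ne (x : Fin q ⊕ Fin q) : tfun φ x ≠ x := by
  intro h
  have := tfun_isRight φ x
  rw [h] at this
  cases x <;> simp at this

lemma sigma_fixed (hβ : IsPairing β) (x : Fin q ⊕ Fin q) (hx : ¬ sd (β x) = sd x) :
    tfun φ (β x) = x := by
  match x with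
  | Sum.inl i =>
    have h : ¬ (β (Sum.inl i)).isLeft := by
      intro h
      exact hx (by rw [(sd_eq_zero_iff _).2 h]; rfl)
    obtain ⟨j, hj⟩ := Sum.isRight_iff.1 (Sum.not_isLeft.1 h)
    have hji : β (Sum.inr j) = Sum.inl i := by rw [← hj, pairing_invol hβ]
    rw [hj, tfun_inr_neg φ j (by rw [hji]; simp), hji]
  | Sum.inr j =>
    have h : ¬ (β (Sum.inr j)).isRight := by
      intro h
      exact hx (by rw [(sd_eq_one_iff _).2 h]; rfl)
    obtain ⟨i, hi⟩ := Sum.isLeft_iff.1 (Sum.not_isRight.1 h)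
    have hij : β (Sum.inl i) = Sum.inr j := by rw [← hi, pairing_invol hβ]
    rw [hi, tfun_inl_neg φ i (by rw [hij]; simp), hij]

lemma sigma_inl_pos (hβ : IsPairing β) (i : Fin q) (h : (β (Sum.inl i)).isLeft) :
    tfun φ (β (Sum.inl i)) = Sum.inr (φ (fA hβ ⟨i, h⟩)).1 := by
  have h1 : β (Sum.inl i) = Sum.inl ((fA hβ ⟨i, h⟩).1) := (inl_fA hβ ⟨i, h⟩).symm
  rw [h1, tfun_inl_pos φ _ (fA hβ ⟨i, h⟩).2]
  exact congrArg (fun a => Sum.inr (φ a).1) (Subtype.ext rfl)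

lemma sigma_inr_pos (hβ : IsPairing β) (j : Fin q) (h : (β (Sum.inr j)).isRight) :
    tfun φ (β (Sum.inr j)) = Sum.inl (φ.symm (fB hβ ⟨j, h⟩)).1 := by
  have h1 : β (Sum.inr j) = Sum.inr ((fB hβ ⟨j, h⟩).1) := (inr_fB hβ ⟨j, h⟩).symm
  rw [h1, tfun_inr_pos φ _ (fB hβ ⟨j, h⟩).2]
  exact congrArg (fun b => Sum.inl (φ.symm b).1) (Subtype.ext rfl)

lemma sigma_sigma (hβ : IsPairing β) (hφ : ∀ a, φ (fA hβ a) = fB hβ (φ a))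
    (x : Fin q ⊕ Fin q) : tfun φ (β (tfun φ (β x))) = x := by
  by_cases hx : sd (β x) = sd x
  swap
  · rw [sigma_fixed φ hβ x hx, sigma_fixed φ hβ x hx]
  match x with
  | Sum.inl i =>
    have h : (β (Sum.inl i)).isLeft := by
      rw [← sd_eq_zero_iff]
      rw [show sd (Sum.inl i : Fin q ⊕ Fin q) = 0 from rfl] at hx
      exact hx
    rw [sigma_inl_pos φ hβ i h]; erw [hφ]
    rw [sigma_inr_pos φ hβ _ (fB hβ (φ ⟨i, h⟩)).2]
    have : (⟨(fB hβ (φ ⟨i, h⟩)).1, (fB hβ (φ ⟨i, h⟩)).2⟩ : Rw β) = fB hβ (φ ⟨i, h⟩) := rfl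
    rw [this]; erw [fB_invol hβ, Equiv.symm_apply_apply]
  | Sum.inr j =>
    have h : (β (Sum.inr j)).isRight := by
      rw [← sd_eq_one_iff]
      rw [show sd (Sum.inr j : Fin q ⊕ Fin q) = 1 from rfl] at hx
      exact hx
    rw [sigma_inr_pos φ hβ j h]
    rw [sigma_inl_pos φ hβ _ (φ.symm (fB hβ ⟨j, h⟩)).2]
    have : (⟨(φ.symm (fB hβ ⟨j, h⟩)).1, (φ.symm (fB hβ ⟨j, h⟩)).2⟩ : Lw β)
        = φ.symm (fB hβ ⟨j, h⟩) := rfl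
    rw [this, hφ, Equiv.apply_symm_apply]; erw [fB_invol hβ]

lemma exists_good_tau (hβ : IsPairing β) :
    ∃ τ : Equiv.Perm (Fin q ⊕ Fin q), IsPairing τ ∧ IsTransverse τ ∧
      permLength (τ * β) = bR β := by
  obtain ⟨φ, hφ⟩ := exists_phi hβ
  let τ : Equiv.Perm (Fin q ⊕ Fin q) := Function.Involutive.toPerm _ (tfun_invol φ hβ)
  have hτ : ∀ x, τ x = tfun φ x := fun x => rfl
  have hpair : IsPairing τ := by
    constructor
    · ext x
      rw [Equiv.Perm.mul_apply, Equiv.Perm.one_apply, hτ, hτ]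
      exact tfun_invol φ hβ x
    · intro x
      rw [hτ]
      exact tfun_ne φ x
  have htrans : IsTransverse τ := by
    intro i
    rw [hτ]
    rw [tfun_isRight φ (Sum.inl i)]
    rfl
  have hσ : ∀ x, (τ * β) x = tfun φ (β x) := fun x => by
    rw [Equiv.Perm.mul_apply, hτ]
  have hσ2 : (τ * β) * (τ * β) = 1 := by
    ext x
    rw [Equiv.Perm.mul_apply, hσ, hσ, Equiv.Perm.one_apply]
    exact sigma_sigma φ hβ hφ x
  refine ⟨τ, hpair, htrans, le_antisymm ?_ (lower_bound β hβ τ hpair htrans)⟩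
  have hub := two_mul_permLength_le (τ * β) hσ2
  have hsub : (Finset.univ.filter fun x => (τ * β) x ≠ x)
      ⊆ (Finset.univ.filter fun x : Fin q ⊕ Fin q => sd (β x) = sd x) := by
    intro x hx
    simp only [Finset.mem_filter, Finset.mem_univ, true_and] at hx ⊢
    by_contra hc
    exact hx (by rw [hσ]; exact sigma_fixed φ hβ x hc)
  have hcard := Finset.card_le_card hsub
  rw [card_sameside β hβ] at hcard
  omega

end Fin2

theorem stmt6 (q : ℕ) (hq : 1 ≤ q) (β : Equiv.Perm (Fin q ⊕ Fin q)) (hβ : IsPairing β) :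
    IsLeast {n : ℕ | ∃ τ : Equiv.Perm (Fin q ⊕ Fin q),
      IsPairing τ ∧ IsTransverse τ ∧ n = permLength (τ * β)} (bR β) := by
  constructor
  · obtain ⟨τ, h1, h2, h3⟩ := exists_good_tau hβ
    exact ⟨τ, h1, h2, h3.symm⟩
  · rintro n ⟨τ, h1, h2, rfl⟩
    exact lower_bound β hβ τ h1 h2
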